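/- Let G be a non-discrete Hausdorff topological Boolean group, i.e., a Hausdorff topological abelian group in which x + x = 0 for every x (so G is a topological vector space over the two-element field 𝔽₂), whose topology is not discrete. Then there exist nonempty open sets U_k^j ⊆ G (for k, j ∈ ℕ) such that whenever u_k^j ∈ U_k^j for each k, j ∈ ℕ, the family (u_k^j)_{k,j∈ℕ} is linearly independent over 𝔽₂. -/

import Mathlib

open Filter Topology

/-- A free (nonprincipal) ultrafilter on ℕ. -/
def FreeUltrafilter (p : Ultrafilter ℕ) : Prop := ∀ n : ℕ, p ≠ pure n

/-- `l` is the `p`-limit of the sequence `x`. -/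
def IsPLimit {X : Type*} [TopologicalSpace X] (p : Ultrafilter ℕ) (x : ℕ → X) (l : X) : Prop :=
  ∀ U ∈ nhds l, {n : ℕ | x n ∈ U} ∈ p

/-- A topological space is selectively pseudocompact. -/
def SelectivelyPseudocompact (X : Type*) [TopologicalSpace X] : Prop :=
  ∀ U : ℕ → Set X, (∀ n, IsOpen (U n)) → (∀ n, (U n).Nonempty) →
    ∃ (x : ℕ → X) (l : X) (p : Ultrafilter ℕ),
      FreeUltrafilter p ∧ (∀ n, x n ∈ U n) ∧ IsPLimit p x l

/-- A topological space is countably compact: every infinite subset has an accumulation point. -/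
def CountablyCompact (X : Type*) [TopologicalSpace X] : Prop :=
  ∀ S : Set X, S.Infinite → ∃ x : X, AccPt x (Filter.principal S)

/-- A topological space is countably pracompact. -/
def CountablyPracompact (X : Type*) [TopologicalSpace X] : Prop :=
  ∃ D : Set X, Dense D ∧
    ∀ S : Set X, S ⊆ D → S.Infinite → ∃ x : X, AccPt x (Filter.principal S)

/-- A selective ultrafilter on ℕ. -/
def SelectiveUltrafilter (p : Ultrafilter ℕ) : Prop :=
  FreeUltrafilter p ∧
    ∀ A : ℕ → Set ℕ, Pairwise (Function.onFun Disjoint A) → (⋃ n, A n) = Set.univ →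
      (∃ n, A n ∈ p) ∨ ∃ B ∈ p, ∀ n, (B ∩ A n).ncard = 1

/-- Rudin–Keisler order on ultrafilters on ℕ. -/
def RKle (p q : Ultrafilter ℕ) : Prop := ∃ f : ℕ → ℕ, Ultrafilter.map f q = p

/-- RK-incomparability. -/
def RKIncomparable (p q : Ultrafilter ℕ) : Prop := ¬ RKle p q ∧ ¬ RKle q p

/-- The restriction of a finitely supported `ZMod 2`-valued function (a finite subset of `X`)
to a set `S` (the intersection with `S`). -/
noncomputable def restrictSet {X : Type*} (S : Set X) (f : X →₀ ZMod 2) : X →₀ ZMod 2 :=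
  letI := Classical.decPred (· ∈ S)
  Finsupp.filter (· ∈ S) f

/-- A topological space is pseudocompact: every continuous real-valued function is bounded. -/
def Pseudocompact (X : Type*) [TopologicalSpace X] : Prop :=
  ∀ f : X → ℝ, Continuous f → ∃ M : ℝ, ∀ x : X, |f x| ≤ M

set_option linter.unusedSectionVars false
set_option linter.unusedVariables false

section Stmt8Aux

variable {G : Type*} [AddCommGroup G] [Module (ZMod 2) G]
    [TopologicalSpace G] [IsTopologicalAddGroup G] [T2Space G]

private lemma stmt8_char2 (x : G) : x + x = 0 := by
  have h : (2 : ZMod 2) • x = 0 := by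
    rw [show (2 : ZMod 2) = 0 by decide, zero_smul]
  simpa [two_smul] using h

private lemma stmt8_neg_eq (x : G) : -x = x :=
  neg_eq_of_add_eq_zero_left (stmt8_char2 x)

/-- Invariant: sets below `n` are open nonempty, and any selection-sum over a nonempty
finite index set below `n` stays out of some neighborhood of `0`. -/
private def Inv8 (V : ℕ → Set G) (n : ℕ) : Prop :=
  (∀ i < n, IsOpen (V i) ∧ (V i).Nonempty) ∧
  ∀ T : Finset ℕ, T.Nonempty → (∀ i ∈ T, i < n) →
    ∃ N ∈ 𝓝 (0 : G), ∀ u : ℕ → G, (∀ i ∈ T, u i ∈ V i) → ∑ i ∈ T, u i ∉ N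

private lemma stmt8_exists_ne_zero (hnd : ¬ DiscreteTopology G) {N : Set G}
    (hN : N ∈ 𝓝 (0 : G)) : ∃ x ∈ N, x ≠ 0 := by
  by_contra h
  push_neg at h
  apply hnd
  rw [discreteTopology_iff_isOpen_singleton_zero]
  have h0 : ({0} : Set G) ∈ 𝓝 (0 : G) :=
    Filter.mem_of_superset hN (fun x hx => by simpa using h x hx)
  obtain ⟨O, hO1, hO2, hO3⟩ := mem_nhds_iff.mp h0
  have : O = {0} := Set.Subset.antisymm hO1 (by simpa using hO3)
  rwa [← this]

private lemma inv8_extend (hnd : ¬ DiscreteTopology G) {V : ℕ → Set G} {n : ℕ}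
    (hV : Inv8 V n) : ∃ U : Set G, Inv8 (Function.update V n U) (n + 1) := by
  classical
  have key : ∀ T : Finset ℕ, ∃ N ∈ 𝓝 (0 : G),
      T.Nonempty → (∀ i ∈ T, i < n) → ∀ u : ℕ → G,
        (∀ i ∈ T, u i ∈ V i) → ∑ i ∈ T, u i ∉ N := by
    intro T
    by_cases h : T.Nonempty ∧ ∀ i ∈ T, i < n
    · obtain ⟨N, hN, hN2⟩ := hV.2 T h.1 h.2
      exact ⟨N, hN, fun _ _ => hN2⟩
    · exact ⟨Set.univ, Filter.univ_mem, fun h1 h2 => absurd ⟨h1, h2⟩ h⟩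
  choose NT hNT hNT2 using key
  set Nstar : Set G := ⋂ T ∈ (Finset.range n).powerset, NT T with hNstar_def
  have hNstar : Nstar ∈ 𝓝 (0 : G) :=
    (Filter.biInter_finset_mem _).2 fun T _ => hNT T
  obtain ⟨M1, hM1, hM1s⟩ := exists_nhds_zero_half hNstar
  obtain ⟨M2, hM2o, hM2z, hM2s⟩ := exists_open_nhds_zero_half hM1
  set M : Set G := M2 ∩ interior M1 with hM_def
  have hMo : IsOpen M := hM2o.inter isOpen_interior
  have hMz : (0 : G) ∈ M := ⟨hM2z, mem_interior_iff_mem_nhds.2 hM1⟩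
  have hMMM : ∀ a ∈ M, ∀ b ∈ M, ∀ c ∈ M, a + b + c ∈ Nstar := by
    intro a ha b hb c hc
    exact hM1s _ (hM2s a ha.1 b hb.1) _ (interior_subset hc.2)
  obtain ⟨x, hxM, hx0⟩ := stmt8_exists_ne_zero hnd (hMo.mem_nhds hMz)
  have hxc : ({x}ᶜ : Set G) ∈ 𝓝 (0 : G) :=
    isOpen_compl_singleton.mem_nhds (by simpa using (Ne.symm hx0))
  obtain ⟨M3, hM3, hM3s⟩ := exists_nhds_zero_half hxc
  set O : Set G := M ∩ interior M3 with hO_def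
  have hOo : IsOpen O := hMo.inter isOpen_interior
  have hOz : (0 : G) ∈ O := ⟨hMz, mem_interior_iff_mem_nhds.2 hM3⟩
  set U : Set G := (fun g => g + x) ⁻¹' O with hU_def
  have hUo : IsOpen U := hOo.preimage (continuous_add_right x)
  have hUne : U.Nonempty := ⟨x, by simp only [hU_def, Set.mem_preimage]; rw [stmt8_char2 x]; exact hOz⟩
  refine ⟨U, ?_, ?_⟩
  · intro i hi
    rcases Nat.lt_succ_iff_lt_or_eq.mp hi with hi' | rfl
    · rw [Function.update_of_ne (Nat.ne_of_lt hi')]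
      exact hV.1 i hi'
    · rw [Function.update_self]
      exact ⟨hUo, hUne⟩
  · intro T hTne hTlt
    by_cases hn : n ∈ T
    · -- new index participates
      refine ⟨O, hOo.mem_nhds hOz, ?_⟩
      intro u hu hsum
      have hun : u n ∈ U := by
        have := hu n hn; rwa [Function.update_self] at this
      have hunxO : u n + x ∈ O := hun
      set T' : Finset ℕ := T.erase n with hT'_def
      have hsum' : ∑ i ∈ T', u i = (∑ i ∈ T, u i) + u n := by
        rw [Finset.sum_erase_eq_sub hn, sub_eq_add_neg, stmt8_neg_eq]
      have huT' : ∀ i ∈ T', u i ∈ V i := by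
        intro i hi
        have := hu i (Finset.mem_of_mem_erase hi)
        rwa [Function.update_of_ne (Finset.ne_of_mem_erase hi)] at this
      by_cases hT' : T'.Nonempty
      · have hT'lt : ∀ i ∈ T', i < n := by
          intro i hi
          have h1 := hTlt i (Finset.mem_of_mem_erase hi)
          have h2 := Finset.ne_of_mem_erase hi
          omega
        have hmem : T' ∈ (Finset.range n).powerset :=
          Finset.mem_powerset.2 (fun i hi => Finset.mem_range.2 (hT'lt i hi))
        have hnot := hNT2 T' hT' hT'lt u huT'
        apply hnot
        have heq : ∑ i ∈ T', u i = (∑ i ∈ T, u i) + (u n + x) + x := by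
          rw [hsum']
          have : (∑ i ∈ T, u i) + (u n + x) + x
              = (∑ i ∈ T, u i) + u n + (x + x) := by abel
          rw [this, stmt8_char2, add_zero]
        rw [heq]
        have hin : (∑ i ∈ T, u i) + (u n + x) + x ∈ Nstar :=
          hMMM _ hsum.1 _ hunxO.1 _ hxM
        exact Set.biInter_subset_of_mem hmem hin
      · -- T = {n}
        rw [Finset.not_nonempty_iff_eq_empty] at hT'
        have hsum0 : ∑ i ∈ T', u i = 0 := by rw [hT', Finset.sum_empty]
        have hTeq : ∑ i ∈ T, u i = u n := by
          have h0 : (∑ i ∈ T, u i) + u n = 0 := by rw [← hsum', hsum0]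
          have := add_eq_zero_iff_eq_neg.mp h0
          rwa [stmt8_neg_eq] at this
        have hunO : u n ∈ O := hTeq ▸ hsum
        have h1 : u n ∈ M3 := interior_subset hunO.2
        have h2 : u n + x ∈ M3 := interior_subset hunxO.2
        have h3 := hM3s _ h1 _ h2
        have h4 : u n + (u n + x) = x := by
          rw [← add_assoc, stmt8_char2, zero_add]
        rw [h4] at h3
        exact h3 rfl
    · -- old indices only
      have hTlt' : ∀ i ∈ T, i < n := by
        intro i hi
        have := hTlt i hi
        have : i ≠ n := fun h => hn (h ▸ hi)
        omega
      obtain ⟨N, hN, h2⟩ := hV.2 T hTne hTlt'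
      refine ⟨N, hN, ?_⟩
      intro u hu
      apply h2
      intro i hi
      have := hu i hi
      rwa [Function.update_of_ne (Nat.ne_of_lt (hTlt' i hi))] at this


private noncomputable def seq8 (hnd : ¬ DiscreteTopology G) :
    ∀ n : ℕ, {V : ℕ → Set G // Inv8 V n} := fun n =>
  Nat.rec
    ⟨fun _ => (∅ : Set G),
      ⟨fun i hi => absurd hi (Nat.not_lt_zero i),
       fun T hT hlt => absurd (hlt hT.choose hT.choose_spec) (Nat.not_lt_zero _)⟩⟩
    (fun m p => ⟨Function.update p.1 m (inv8_extend hnd p.2).choose,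
      (inv8_extend hnd p.2).choose_spec⟩) n

private lemma seq8_succ (hnd : ¬ DiscreteTopology G) (m : ℕ) :
    (seq8 hnd (m + 1)).1 =
      Function.update (seq8 hnd m).1 m (inv8_extend hnd (seq8 hnd m).2).choose := rfl

private lemma seq8_agree (hnd : ¬ DiscreteTopology G) :
    ∀ m i, i < m → (seq8 hnd m).1 i = (seq8 hnd (i + 1)).1 i := by
  intro m
  induction m with
  | zero => intro i hi; omega
  | succ m ih =>
    intro i hi
    rcases Nat.lt_succ_iff_lt_or_eq.mp hi with h | rfl
    · rw [seq8_succ, Function.update_of_ne (Nat.ne_of_lt h)]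
      exact ih i h
    · rfl

private noncomputable def V8 (hnd : ¬ DiscreteTopology G) (i : ℕ) : Set G :=
  (seq8 hnd (i + 1)).1 i

private lemma V8_open (hnd : ¬ DiscreteTopology G) (i : ℕ) : IsOpen (V8 hnd i) :=
  ((seq8 hnd (i + 1)).2.1 i (Nat.lt_succ_self i)).1

private lemma V8_nonempty (hnd : ¬ DiscreteTopology G) (i : ℕ) : (V8 hnd i).Nonempty :=
  ((seq8 hnd (i + 1)).2.1 i (Nat.lt_succ_self i)).2

private lemma V8_key (hnd : ¬ DiscreteTopology G) (T : Finset ℕ) (hT : T.Nonempty) :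
    ∃ N ∈ 𝓝 (0 : G), ∀ u : ℕ → G, (∀ i ∈ T, u i ∈ V8 hnd i) → ∑ i ∈ T, u i ∉ N := by
  set n := T.sup id + 1 with hn
  have hlt : ∀ i ∈ T, i < n := fun i hi => Nat.lt_succ_of_le (Finset.le_sup (f := id) hi)
  obtain ⟨N, hN, h2⟩ := (seq8 hnd n).2.2 T hT hlt
  refine ⟨N, hN, fun u hu => h2 u fun i hi => ?_⟩
  rw [seq8_agree hnd n i (hlt i hi)]
  exact hu i hi

end Stmt8Aux

/-- in a non-discrete Hausdorff topological Boolean group there is a doubly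
indexed family of nonempty open sets any selection from which is linearly independent
over `𝔽₂`. -/
theorem stmt8 {G : Type*} [AddCommGroup G] [Module (ZMod 2) G]
    [TopologicalSpace G] [IsTopologicalAddGroup G] [T2Space G]
    (hnd : ¬ DiscreteTopology G) :
    ∃ U : ℕ → ℕ → Set G,
      (∀ k j, IsOpen (U k j)) ∧ (∀ k j, (U k j).Nonempty) ∧
      ∀ u : ℕ → ℕ → G, (∀ k j, u k j ∈ U k j) →
        LinearIndependent (ZMod 2) (fun kj : ℕ × ℕ => u kj.1 kj.2) := by
  classical
  refine ⟨fun k j => V8 hnd (Nat.pairEquiv (k, j)), fun k j => V8_open hnd _,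
    fun k j => V8_nonempty hnd _, ?_⟩
  intro u hu
  rw [linearIndependent_iff']
  intro s g hg i hi
  by_contra hgi
  have hone : ∀ a : ZMod 2, a ≠ 0 → a = 1 := by decide
  set s' := s.filter (fun kj => g kj ≠ 0) with hs'
  have hs'ne : s'.Nonempty := ⟨i, Finset.mem_filter.2 ⟨hi, hgi⟩⟩
  have hsum1 : ∑ kj ∈ s', u kj.1 kj.2 = 0 := by
    have h1 : ∑ kj ∈ s', g kj • u kj.1 kj.2 = ∑ kj ∈ s, g kj • u kj.1 kj.2 :=
      Finset.sum_filter_of_ne (fun kj _ h h0 => h (by rw [h0, zero_smul]))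
    have h2 : ∑ kj ∈ s', u kj.1 kj.2 = ∑ kj ∈ s', g kj • u kj.1 kj.2 :=
      Finset.sum_congr rfl fun kj hkj => by
        rw [hone _ (Finset.mem_filter.mp hkj).2, one_smul]
    rw [h2, h1, hg]
  set T := s'.image Nat.pairEquiv with hT
  have hTne : T.Nonempty := hs'ne.image Nat.pairEquiv
  obtain ⟨N, hN, hkey⟩ := V8_key hnd T hTne
  set u' : ℕ → G := fun m => u (Nat.pairEquiv.symm m).1 (Nat.pairEquiv.symm m).2 with hu'
  have hmem : ∀ m ∈ T, u' m ∈ V8 hnd m := by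
    intro m hm
    obtain ⟨kj, hkj, rfl⟩ := Finset.mem_image.mp hm
    have : u' (Nat.pairEquiv kj) = u kj.1 kj.2 := by
      simp only [hu', Equiv.symm_apply_apply]
    rw [this]
    exact hu kj.1 kj.2
  have hsum2 : ∑ m ∈ T, u' m = ∑ kj ∈ s', u kj.1 kj.2 := by
    rw [hT, Finset.sum_image (fun a _ b _ h => Nat.pairEquiv.injective h)]
    exact Finset.sum_congr rfl fun kj _ => by simp only [hu', Equiv.symm_apply_apply]
  exact hkey u' hmem (by rw [hsum2, hsum1]; exact mem_of_mem_nhds hN)
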